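/- Let 𝒢ᶜ: 𝒢 → Mon be the conjugation action of a groupoid 𝒢 on its own isotropy groups. For objects θ: X → 𝒢ᶜ and τ: Y → 𝒢ᶜ of Set^𝒢 / 𝒢ᶜ, the maps η_G: X(G) × Y(G) → Y(G) × X(G), (x,y) ↦ (Y(θ_G(x))(y), x), assemble into a natural isomorphism X ⊗ Y ≅ Y ⊗ X of objects over 𝒢ᶜ, with inverse (y,x) ↦ (x, Y(θ_G(x)⁻¹)(y)). -/

import Mathlib

open CategoryTheory

universe v u

section GSets
variable {G : Type u} [Groupoid.{v} G]

/-- Pointwise product of `𝒢`-sets. -/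
@[simps] def prodF (X Y : G ⥤ FintypeCat.{v}) : G ⥤ FintypeCat.{v} where
  obj g := FintypeCat.of (X.obj g × Y.obj g)
  map h := FintypeCat.homMk fun p => (X.map h p.1, Y.map h p.2)
  map_id g := by ext p <;> simp <;> rfl
  map_comp f h := by ext p <;> simp <;> rfl

/-- Pointwise coproduct (disjoint union) of `𝒢`-sets. -/
@[simps] def coprodF (X Y : G ⥤ FintypeCat.{v}) : G ⥤ FintypeCat.{v} where
  obj g := FintypeCat.of (X.obj g ⊕ Y.obj g)
  map h := FintypeCat.homMk fun p => Sum.map (X.map h) (Y.map h) p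
  map_id g := by ext p; cases p <;> simp <;> rfl
  map_comp f h := by ext p; cases p <;> simp <;> rfl

/-- The terminal `𝒢`-set. -/
def termF : G ⥤ FintypeCat.{v} := (Functor.const G).obj (FintypeCat.of PUnit)

end GSets

section Tensor
variable {G : Type u} [Groupoid.{v} G]
variable (Sb : G ⥤ FintypeCat.{v}) [∀ g : G, Monoid (Sb.obj g)]

/-- The tensor product of two crossed `𝒢`-sets over the `𝒢`-monoid with underlying
`𝒢`-set `Sb`: the underlying `𝒢`-set is the pointwise product, and the structure map
is `(x, y) ↦ θ(x) · τ(y)`. -/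
def tensorOver
    (hmul : ∀ ⦃x y : G⦄ (h : x ⟶ y) (a b : Sb.obj x), Sb.map h (a * b) = Sb.map h a * Sb.map h b)
    (u v : Over Sb) : Over Sb :=
  Over.mk (Y := prodF u.left v.left)
    { app := fun g => FintypeCat.homMk fun p =>
        (show Sb.obj g from u.hom.app g p.1) * (show Sb.obj g from v.hom.app g p.2)
      naturality := by
        intro x y f
        ext p
        have hu : (show Sb.obj y from u.hom.app y (u.left.map f p.1)) =
            Sb.map f (show Sb.obj x from u.hom.app x p.1) :=
          ConcreteCategory.congr_hom (u.hom.naturality f) p.1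
        have hv : (show Sb.obj y from v.hom.app y (v.left.map f p.2)) =
            Sb.map f (show Sb.obj x from v.hom.app x p.2) :=
          ConcreteCategory.congr_hom (v.hom.naturality f) p.2
        exact (congrArg₂ (· * ·) hu hv).trans (hmul f _ _).symm }

/-- The unit object: the terminal `𝒢`-set mapping to the identity elements of the
`𝒢`-monoid. -/
def unitOver
    (hone : ∀ ⦃x y : G⦄ (h : x ⟶ y), Sb.map h (1 : Sb.obj x) = 1) : Over Sb :=
  Over.mk (Y := termF)
    { app := fun g => FintypeCat.homMk fun _ => (1 : Sb.obj g)
      naturality := by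
        intro x y f
        ext p
        exact (hone f).symm }

/-- Coproducts in the category of crossed `𝒢`-sets. -/
def coprodOver (u v : Over Sb) : Over Sb :=
  Over.mk (Y := coprodF u.left v.left)
    { app := fun g => FintypeCat.homMk fun p => Sum.elim (u.hom.app g) (v.hom.app g) p
      naturality := by intro x y f; ext p; cases p with
        | inl a => exact ConcreteCategory.congr_hom (u.hom.naturality f) a
        | inr b => exact ConcreteCategory.congr_hom (v.hom.naturality f) b }

end Tensor

section Conj
variable (G : Type u) [Groupoid.{v} G] [∀ x y : G, Fintype (x ⟶ y)]

/-- The underlying `𝒢`-set of the conjugation action `𝒢ᶜ : 𝒢 ⥤ Mon`, sending an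
object to its isotropy group and a morphism `g` to conjugation by `g`. -/
@[simps] def GcBar : G ⥤ FintypeCat.{v} where
  obj x := FintypeCat.of (x ⟶ x)
  map g := FintypeCat.homMk fun n => Groupoid.inv g ≫ n ≫ g
  map_id x := by ext n; change Groupoid.inv (𝟙 x) ≫ n ≫ 𝟙 x = n; simp
  map_comp f h := by
    ext n
    change Groupoid.inv (f ≫ h) ≫ n ≫ f ≫ h = Groupoid.inv h ≫ (Groupoid.inv f ≫ n ≫ f) ≫ h
    simp [Groupoid.inv_eq_inv]

/-- The monoid structure on the isotropy group `𝒢ₓ`, with multiplication written in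
function-composition order as in the paper (`(g·h) = g ∘ h`). -/
instance (x : G) : Monoid ((GcBar G).obj x) := inferInstanceAs (Monoid (End x))

lemma GcBar_map_mul : ∀ ⦃x y : G⦄ (h : x ⟶ y) (a b : (GcBar G).obj x),
    (GcBar G).map h (a * b) = (GcBar G).map h a * (GcBar G).map h b := by
  intro x y h (a : x ⟶ x) (b : x ⟶ x)
  show Groupoid.inv h ≫ (b ≫ a) ≫ h = (Groupoid.inv h ≫ b ≫ h) ≫ Groupoid.inv h ≫ a ≫ h
  simp [Groupoid.inv_eq_inv]

lemma GcBar_map_one : ∀ ⦃x y : G⦄ (h : x ⟶ y),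
    (GcBar G).map h (1 : (GcBar G).obj x) = 1 := by
  intro x y h
  show Groupoid.inv h ≫ 𝟙 x ≫ h = 𝟙 y
  simp

end Conj

/-- Let `𝒢ᶜ : 𝒢 → Mon` be the conjugation action of a groupoid `𝒢` on its own isotropy
groups.  For crossed `𝒢`-sets `θ : X → 𝒢ᶜ` and `τ : Y → 𝒢ᶜ`, the maps
`η_G : X(G) × Y(G) → Y(G) × X(G)`, `(x, y) ↦ (Y(θ_G(x))(y), x)` assemble into an
isomorphism `X ⊗ Y ≅ Y ⊗ X` of crossed `𝒢`-sets over `𝒢ᶜ`, with inverse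
`(y, x) ↦ (x, Y(θ_G(x)⁻¹)(y))`. -/
theorem braiding_iso_over_conjugation (G : Type u) [Groupoid.{v} G]
    [∀ x y : G, Fintype (x ⟶ y)] (u v : Over (GcBar G)) :
    ∃ e : tensorOver (GcBar G) (GcBar_map_mul G) u v ≅
          tensorOver (GcBar G) (GcBar_map_mul G) v u,
      (∀ (g : G) (p : u.left.obj g × v.left.obj g),
        (show ((prodF v.left u.left).obj g : Type v) from
            e.hom.left.app g (show ((prodF u.left v.left).obj g : Type v) from p)) =
          (v.left.map (show g ⟶ g from u.hom.app g p.1) p.2, p.1)) ∧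
      (∀ (g : G) (q : v.left.obj g × u.left.obj g),
        (show ((prodF u.left v.left).obj g : Type v) from
            e.inv.left.app g (show ((prodF v.left u.left).obj g : Type v) from q)) =
          (q.2, v.left.map (Groupoid.inv (show g ⟶ g from u.hom.app g q.2)) q.1)) := by
  classical
  -- forward natural transformation on underlying 𝒢-sets
  refine ⟨⟨Over.homMk
      { app := fun g => FintypeCat.homMk fun (p : u.left.obj g × v.left.obj g) =>
          (show ((prodF v.left u.left).obj g : Type v) from
            (v.left.map (show g ⟶ g from u.hom.app g p.1) p.2, p.1))
        naturality := ?_ } ?_,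
    Over.homMk
      { app := fun g => FintypeCat.homMk fun (q : v.left.obj g × u.left.obj g) =>
          (show ((prodF u.left v.left).obj g : Type v) from
            (q.2, v.left.map (Groupoid.inv (show g ⟶ g from u.hom.app g q.2)) q.1))
        naturality := ?_ } ?_, ?_, ?_⟩, fun g p => rfl, fun g q => rfl⟩
  · intro x y f
    refine ConcreteCategory.hom_ext _ _ (fun p => ?_)
    obtain ⟨a, b⟩ := (p : u.left.obj x × v.left.obj x)
    have hθ : (show (GcBar G).obj y from u.hom.app y (u.left.map f a)) =
        (GcBar G).map f (show (GcBar G).obj x from u.hom.app x a) :=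
      ConcreteCategory.congr_hom (u.hom.naturality f) a
    show ((v.left.map (show y ⟶ y from u.hom.app y (u.left.map f a))
        (v.left.map f b) : v.left.obj y), u.left.map f a) =
      ((v.left.map f (v.left.map (show x ⟶ x from u.hom.app x a) b) : v.left.obj y),
        u.left.map f a)
    rw [hθ]
    have : v.left.map ((GcBar G).map f (show (GcBar G).obj x from u.hom.app x a))
        (v.left.map f b) = v.left.map f (v.left.map (show x ⟶ x from u.hom.app x a) b) := by
      show v.left.map (Groupoid.inv f ≫ (show x ⟶ x from u.hom.app x a) ≫ f)
          (v.left.map f b) = _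
      rw [v.left.map_comp, v.left.map_comp]
      show v.left.map f (v.left.map _ (v.left.map (Groupoid.inv f) (v.left.map f b))) = _
      -- descend under v.left.map f
      have : v.left.map (Groupoid.inv f) (v.left.map f b) =
          v.left.map (f ≫ Groupoid.inv f) b := by rw [v.left.map_comp]; rfl
      rw [this]
      simp
    rw [this]
  · -- compatibility with structure maps (forward)
    ext g p
    obtain ⟨a, b⟩ := (p : u.left.obj g × v.left.obj g)
    show (show (GcBar G).obj g from
        v.hom.app g (v.left.map (show g ⟶ g from u.hom.app g a) b)) *
        (show (GcBar G).obj g from u.hom.app g a) =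
      (show (GcBar G).obj g from u.hom.app g a) *
        (show (GcBar G).obj g from v.hom.app g b)
    have hτ : (show (GcBar G).obj g from
        v.hom.app g (v.left.map (show g ⟶ g from u.hom.app g a) b)) =
        (GcBar G).map (show g ⟶ g from u.hom.app g a)
          (show (GcBar G).obj g from v.hom.app g b) :=
      ConcreteCategory.congr_hom (v.hom.naturality (show g ⟶ g from u.hom.app g a)) b
    rw [hτ]
    show (show g ⟶ g from u.hom.app g a) ≫
        (Groupoid.inv (show g ⟶ g from u.hom.app g a) ≫
          (show g ⟶ g from v.hom.app g b) ≫ (show g ⟶ g from u.hom.app g a)) =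
      (show g ⟶ g from v.hom.app g b) ≫ (show g ⟶ g from u.hom.app g a)
    rw [← Category.assoc, Groupoid.comp_inv, Category.id_comp]
  · -- naturality (backward)
    intro x y f
    refine ConcreteCategory.hom_ext _ _ (fun q => ?_)
    obtain ⟨b, a⟩ := (q : v.left.obj x × u.left.obj x)
    have hθ : (show (GcBar G).obj y from u.hom.app y (u.left.map f a)) =
        (GcBar G).map f (show (GcBar G).obj x from u.hom.app x a) :=
      ConcreteCategory.congr_hom (u.hom.naturality f) a
    show ((u.left.map f a : u.left.obj y),
        (v.left.map (Groupoid.inv (show y ⟶ y from u.hom.app y (u.left.map f a)))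
          (v.left.map f b) : v.left.obj y)) =
      ((u.left.map f a : u.left.obj y),
        (v.left.map f (v.left.map (Groupoid.inv (show x ⟶ x from u.hom.app x a)) b) :
          v.left.obj y))
    rw [hθ]
    have hi : Groupoid.inv ((GcBar G).map f (show (GcBar G).obj x from u.hom.app x a)) =
        Groupoid.inv f ≫ Groupoid.inv (show x ⟶ x from u.hom.app x a) ≫ f := by
      show Groupoid.inv (Groupoid.inv f ≫ (show x ⟶ x from u.hom.app x a) ≫ f) = _
      have key2 : ∀ {X Y : G} (f : X ⟶ Y) (c : X ⟶ X),
          Groupoid.inv (Groupoid.inv f ≫ c ≫ f) = Groupoid.inv f ≫ Groupoid.inv c ≫ f := by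
        intro X Y f c; simp [Groupoid.inv_eq_inv]
      exact key2 _ _
    rw [hi]
    have : v.left.map (Groupoid.inv f ≫ Groupoid.inv (show x ⟶ x from u.hom.app x a) ≫ f)
        (v.left.map f b) =
        v.left.map f (v.left.map (Groupoid.inv (show x ⟶ x from u.hom.app x a)) b) := by
      rw [v.left.map_comp, v.left.map_comp]
      show v.left.map f (v.left.map _ (v.left.map (Groupoid.inv f) (v.left.map f b))) = _
      -- descend under v.left.map f
      have : v.left.map (Groupoid.inv f) (v.left.map f b) =
          v.left.map (f ≫ Groupoid.inv f) b := by rw [v.left.map_comp]; rfl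
      rw [this]
      simp
    rw [this]
  · -- compatibility with structure maps (backward)
    ext g q
    obtain ⟨b, a⟩ := (q : v.left.obj g × u.left.obj g)
    show (show (GcBar G).obj g from u.hom.app g a) *
        (show (GcBar G).obj g from
          v.hom.app g (v.left.map (Groupoid.inv (show g ⟶ g from u.hom.app g a)) b)) =
      (show (GcBar G).obj g from v.hom.app g b) *
        (show (GcBar G).obj g from u.hom.app g a)
    have hτ : (show (GcBar G).obj g from
        v.hom.app g (v.left.map (Groupoid.inv (show g ⟶ g from u.hom.app g a)) b)) =
        (GcBar G).map (Groupoid.inv (show g ⟶ g from u.hom.app g a))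
          (show (GcBar G).obj g from v.hom.app g b) :=
      ConcreteCategory.congr_hom (v.hom.naturality (Groupoid.inv (show g ⟶ g from u.hom.app g a))) b
    rw [hτ]
    show (Groupoid.inv (Groupoid.inv (show g ⟶ g from u.hom.app g a)) ≫
        (show g ⟶ g from v.hom.app g b) ≫
          Groupoid.inv (show g ⟶ g from u.hom.app g a)) ≫
        (show g ⟶ g from u.hom.app g a) =
      (show g ⟶ g from u.hom.app g a) ≫ (show g ⟶ g from v.hom.app g b)
    have key : ∀ {X Y : G} (f : X ⟶ Y), Groupoid.inv (Groupoid.inv f) = f := fun f => by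
      simp [Groupoid.inv_eq_inv]
    rw [key]
    rw [Category.assoc, Category.assoc, Groupoid.inv_comp, Category.comp_id]
  · -- hom_inv_id
    ext g p
    obtain ⟨a, b⟩ := (p : u.left.obj g × v.left.obj g)
    show ((a : u.left.obj g),
        (v.left.map (Groupoid.inv (show g ⟶ g from u.hom.app g a))
          (v.left.map (show g ⟶ g from u.hom.app g a) b) : v.left.obj g)) = (a, b)
    have : v.left.map (Groupoid.inv (show g ⟶ g from u.hom.app g a))
        (v.left.map (show g ⟶ g from u.hom.app g a) b) =
        v.left.map ((show g ⟶ g from u.hom.app g a) ≫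
          Groupoid.inv (show g ⟶ g from u.hom.app g a)) b := by
      rw [v.left.map_comp]; rfl
    rw [this]
    rw [Groupoid.comp_inv]; simp
  · -- inv_hom_id
    ext g q
    obtain ⟨b, a⟩ := (q : v.left.obj g × u.left.obj g)
    show ((v.left.map (show g ⟶ g from u.hom.app g a)
        (v.left.map (Groupoid.inv (show g ⟶ g from u.hom.app g a)) b) : v.left.obj g),
        (a : u.left.obj g)) = (b, a)
    have : v.left.map (show g ⟶ g from u.hom.app g a)
        (v.left.map (Groupoid.inv (show g ⟶ g from u.hom.app g a)) b) =
        v.left.map (Groupoid.inv (show g ⟶ g from u.hom.app g a) ≫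
          (show g ⟶ g from u.hom.app g a)) b := by
      rw [v.left.map_comp]; rfl
    rw [this]
    rw [Groupoid.inv_comp]; simp
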